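/- Given positive integers N, t, k, v with t ≥ 2 and a set ℐ ⊆ V^N of admissible columns (|V| = v), if (t/(t−1))^t · (t−1) · C₁ < |ℐ|^t, where C₁ = C(k, t−1) · |𝒜_t| and 𝒜_t is the set of N×t arrays with columns in ℐ that fail to contain some element of V^t among their rows, then there exists an N×k covering array of strength t over V all of whose columns lie in ℐ. -/

import Mathlib

-- aux1: ratio bound
lemma aux_choose : ∀ (s n Nn : ℕ), s ≤ n → n ≤ Nn →
    Nn.choose s * (n - s + 1) ^ s ≤ n.choose s * (Nn - s + 1) ^ s := by
  intro s
  induction s with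
  | zero => simp
  | succ s ih =>
    intro n Nn h1 h2
    have hsn : s ≤ n := le_of_lt h1
    have key : Nn.choose s * (n - s) ^ s ≤ n.choose s * (Nn - s) ^ s := by
      have hih := ih n Nn hsn h2
      have hb : (n - s) * (Nn - s + 1) ≤ (n - s + 1) * (Nn - s) := by
        have : n - s ≤ Nn - s := by omega
        nlinarith [this]
      have hb' : ((n - s) * (Nn - s + 1)) ^ s ≤ ((n - s + 1) * (Nn - s)) ^ s :=
        Nat.pow_le_pow_left hb s
      have c1 : Nn.choose s * (n - s) ^ s * (Nn - s + 1) ^ s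
          ≤ n.choose s * (Nn - s) ^ s * (Nn - s + 1) ^ s := by
        calc Nn.choose s * (n - s) ^ s * (Nn - s + 1) ^ s
            = Nn.choose s * ((n - s) * (Nn - s + 1)) ^ s := by
              rw [mul_pow, mul_assoc]
          _ ≤ Nn.choose s * ((n - s + 1) * (Nn - s)) ^ s :=
              Nat.mul_le_mul_left _ hb'
          _ = Nn.choose s * (n - s + 1) ^ s * (Nn - s) ^ s := by
              rw [mul_pow, mul_assoc]
          _ ≤ n.choose s * (Nn - s + 1) ^ s * (Nn - s) ^ s :=
              Nat.mul_le_mul_right _ hih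
          _ = n.choose s * (Nn - s) ^ s * (Nn - s + 1) ^ s := by ring
      exact Nat.le_of_mul_le_mul_right c1 (by positivity)
    -- multiply by (Nn - s) * (n - s)
    have c2 : Nn.choose s * (Nn - s) * (n - s) ^ (s + 1)
        ≤ n.choose s * (n - s) * (Nn - s) ^ (s + 1) := by
      calc Nn.choose s * (Nn - s) * (n - s) ^ (s + 1)
          = Nn.choose s * (n - s) ^ s * ((Nn - s) * (n - s)) := by ring
        _ ≤ n.choose s * (Nn - s) ^ s * ((Nn - s) * (n - s)) :=
            Nat.mul_le_mul_right _ key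
        _ = n.choose s * (n - s) * (Nn - s) ^ (s + 1) := by ring
    have i1 : Nn.choose (s + 1) * (s + 1) = Nn.choose s * (Nn - s) :=
      Nat.choose_succ_right_eq Nn s
    have i2 : n.choose (s + 1) * (s + 1) = n.choose s * (n - s) :=
      Nat.choose_succ_right_eq n s
    have hsub1 : n - (s + 1) + 1 = n - s := by omega
    have hsub2 : Nn - (s + 1) + 1 = Nn - s := by omega
    rw [hsub1, hsub2]
    have c3 : Nn.choose (s + 1) * (s + 1) * (n - s) ^ (s + 1)
        ≤ n.choose (s + 1) * (s + 1) * (Nn - s) ^ (s + 1) := by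
      rw [i1, i2]; exact c2
    refine Nat.le_of_mul_le_mul_right ?_ (Nat.succ_pos s)
    calc Nn.choose (s + 1) * (n - s) ^ (s + 1) * (s + 1)
        = Nn.choose (s + 1) * (s + 1) * (n - s) ^ (s + 1) := by ring
      _ ≤ n.choose (s + 1) * (s + 1) * (Nn - s) ^ (s + 1) := c3
      _ = n.choose (s + 1) * (Nn - s) ^ (s + 1) * (s + 1) := by ring

-- Pascal telescoping
lemma choose_pascal_sum (k s : ℕ) : ∀ D : ℕ,
    (k + D).choose (s + 1) =
      k.choose (s + 1) + ∑ j ∈ Finset.range D, (k + j).choose s := by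
  intro D
  induction D with
  | zero => simp
  | succ D ih =>
    have : k + (D + 1) = (k + D) + 1 := by omega
    rw [this, Nat.choose_succ_succ, Finset.sum_range_succ, ih]
    omega

-- Key bound: C(k+D, s+1) ≤ (D+1) * ((s+1)/s)^(s+1) * s * C(k,s)
lemma aux_key (s k D : ℕ) (hs : 1 ≤ s) (hk : s + 1 ≤ k)
    (hD1 : k - s + 1 ≤ s * D) (hD2 : s * D ≤ k) :
    (((k + D).choose (s + 1) : ℝ)) ≤
      ((D : ℝ) + 1) * ((((s : ℝ) + 1) / s) ^ (s + 1) * s) * (k.choose s) := by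
  have hsR : (0 : ℝ) < s := by exact_mod_cast hs
  have hsk : s ≤ k := by omega
  set P : ℝ := (((s : ℝ) + 1) / s) ^ s with hP
  have hP1 : (1 : ℝ) ≤ P := by
    apply one_le_pow₀
    rw [le_div_iff₀ hsR]; linarith
  -- per-term bound in ℕ: s^s * (k+j).choose s ≤ (s+1)^s * k.choose s for j < D
  have term : ∀ j < D, ((k + j).choose s : ℝ) ≤ P * k.choose s := by
    intro j hj
    have a1 : s * j ≤ k - s := by
      have : s * j + s ≤ s * D := by
        have := Nat.mul_le_mul_left s (Nat.succ_le_of_lt hj)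
        simpa [Nat.mul_succ] using this
      omega
    have hA : (k + j).choose s * (k - s + 1) ^ s ≤ k.choose s * (k + j - s + 1) ^ s :=
      aux_choose s k (k + j) hsk (by omega)
    have hsub : k + j - s + 1 = (k - s + 1) + j := by omega
    have hmul : s * ((k - s + 1) + j) ≤ (s + 1) * (k - s + 1) := by
      have : s * j ≤ k - s + 1 := by omega
      nlinarith
    have hpow : (s * ((k - s + 1) + j)) ^ s ≤ ((s + 1) * (k - s + 1)) ^ s :=
      Nat.pow_le_pow_left hmul s
    have hN : s ^ s * ((k + j).choose s) ≤ (s + 1) ^ s * k.choose s := by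
      have c1 : s ^ s * ((k + j).choose s) * (k - s + 1) ^ s
          ≤ (s + 1) ^ s * k.choose s * (k - s + 1) ^ s := by
        calc s ^ s * ((k + j).choose s) * (k - s + 1) ^ s
            = s ^ s * ((k + j).choose s * (k - s + 1) ^ s) := by ring
          _ ≤ s ^ s * (k.choose s * ((k - s + 1) + j) ^ s) := by
              rw [hsub] at hA; exact Nat.mul_le_mul_left _ hA
          _ = k.choose s * (s * ((k - s + 1) + j)) ^ s := by
              rw [mul_pow]; ring
          _ ≤ k.choose s * ((s + 1) * (k - s + 1)) ^ s :=
              Nat.mul_le_mul_left _ hpow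
          _ = (s + 1) ^ s * k.choose s * (k - s + 1) ^ s := by
              rw [mul_pow]; ring
      exact Nat.le_of_mul_le_mul_right c1 (by positivity)
    have hNR : (s : ℝ) ^ s * ((k + j).choose s) ≤ ((s : ℝ) + 1) ^ s * k.choose s := by
      exact_mod_cast hN
    have : ((k + j).choose s : ℝ) ≤ ((s : ℝ) + 1) ^ s / (s : ℝ) ^ s * k.choose s := by
      rw [div_mul_eq_mul_div, le_div_iff₀ (by positivity)]
      linarith [hNR]
    simpa [hP, div_pow] using this
  -- Pascal
  have pas : ((k + D).choose (s + 1) : ℝ) =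
      (k.choose (s + 1) : ℝ) + ∑ j ∈ Finset.range D, ((k + j).choose s : ℝ) := by
    have := choose_pascal_sum k s D
    push_cast [this]
    ring
  have sum_le : ∑ j ∈ Finset.range D, ((k + j).choose s : ℝ) ≤ D * (P * k.choose s) := by
    calc ∑ j ∈ Finset.range D, ((k + j).choose s : ℝ)
        ≤ ∑ _j ∈ Finset.range D, P * k.choose s :=
          Finset.sum_le_sum (fun j hj => term j (Finset.mem_range.mp hj))
      _ = D * (P * k.choose s) := by simp [Finset.sum_const, mul_comm]
  have first_le : (k.choose (s + 1) : ℝ) ≤ (s : ℝ) * D / (s + 1) * k.choose s := by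
    have i2 : k.choose (s + 1) * (s + 1) = k.choose s * (k - s) :=
      Nat.choose_succ_right_eq k s
    have hks : (k - s : ℕ) ≤ s * D := by omega
    have : (k.choose (s + 1) : ℝ) * (s + 1) ≤ (k.choose s : ℝ) * (s * D) := by
      have e : (k.choose (s + 1) : ℝ) * (s + 1) = (k.choose s : ℝ) * ((k - s : ℕ) : ℝ) := by
        exact_mod_cast i2
      rw [e]
      have : ((k - s : ℕ) : ℝ) ≤ (s : ℝ) * D := by exact_mod_cast hks
      exact mul_le_mul_of_nonneg_left this (by positivity)
    rw [div_mul_eq_mul_div, le_div_iff₀ (by positivity)]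
    linarith
  have hc : ((D : ℝ) + 1) * ((((s : ℝ) + 1) / s) ^ (s + 1) * s)
      = ((D : ℝ) + 1) * P * (s + 1) := by
    rw [pow_succ, hP]
    field_simp
  rw [pas, hc]
  have hch : (0 : ℝ) ≤ (k.choose s : ℝ) := by positivity
  have hDR : (0 : ℝ) ≤ (D : ℝ) := by positivity
  have key : (s : ℝ) * D / (s + 1) * k.choose s + D * (P * k.choose s)
      ≤ ((D : ℝ) + 1) * P * (s + 1) * k.choose s := by
    have h1 : (s : ℝ) * D / (s + 1) ≤ s * D := by
      apply div_le_self (by positivity); linarith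
    have h1c := mul_le_mul_of_nonneg_right h1 hch
    have h2 : (s : ℝ) * D * (k.choose s) ≤ P * ((s : ℝ) * D * (k.choose s)) := by
      nlinarith [mul_nonneg (mul_nonneg hsR.le hDR) hch]
    have h3 : (0 : ℝ) ≤ P * (s : ℝ) * (k.choose s) := by
      have : (0:ℝ) ≤ P := by linarith
      positivity
    have h4 : (0 : ℝ) ≤ P * (k.choose s) := by
      have : (0:ℝ) ≤ P := by linarith
      positivity
    nlinarith [h1c, h2, h3, h4]
  linarith [sum_le, first_le]

-- per-subset counting bound
lemma count_bad_at (N v m t : ℕ) (I : Finset (Fin N → Fin v)) (S : Finset (Fin m))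
    (hS : S.card = t) :
    Fintype.card {f : {g : Fin m → Fin N → Fin v // ∀ j, g j ∈ I} //
        ∃ a : Fin m → Fin v, ∀ r, ∃ x ∈ S, f.1 x r ≠ a x}
    ≤ Nat.card {A : Fin t → (Fin N → Fin v) //
        (∀ i, A i ∈ I) ∧ ∃ a : Fin t → Fin v, ∀ r : Fin N, ∃ i, A i r ≠ a i}
      * I.card ^ (m - t) := by
  classical
  have hScompl : Sᶜ.card = m - t := by
    rw [Finset.card_compl, hS, Fintype.card_fin]
  set e := S.orderIsoOfFin hS with he
  set c := Sᶜ.orderIsoOfFin hScompl with hc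
  set BadT := {A : Fin t → (Fin N → Fin v) //
      (∀ i, A i ∈ I) ∧ ∃ a : Fin t → Fin v, ∀ r : Fin N, ∃ i, A i r ≠ a i}
  set φ : {f : {g : Fin m → Fin N → Fin v // ∀ j, g j ∈ I} //
        ∃ a : Fin m → Fin v, ∀ r, ∃ x ∈ S, f.1 x r ≠ a x} →
      BadT × (Fin (m - t) → {x // x ∈ I}) :=
    fun f => (⟨fun i => f.1.1 ((e i) : Fin m),
      ⟨fun i => f.1.2 _, by
        obtain ⟨a, ha⟩ := f.2
        refine ⟨fun i => a ((e i) : Fin m), fun r => ?_⟩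
        obtain ⟨x, hxS, hne⟩ := ha r
        refine ⟨e.symm ⟨x, hxS⟩, ?_⟩
        simp only [OrderIso.apply_symm_apply]
        exact hne⟩⟩,
      fun j => ⟨f.1.1 ((c j) : Fin m), f.1.2 _⟩) with hφ
  have hinj : Function.Injective φ := by
    intro f₁ f₂ hf
    have h1 := congrArg Prod.fst hf
    have h2 := congrArg Prod.snd hf
    apply Subtype.ext; apply Subtype.ext
    funext x
    by_cases hx : x ∈ S
    · have h1' : (fun i => f₁.1.1 ((e i) : Fin m)) = fun i => f₂.1.1 ((e i) : Fin m) :=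
        congrArg Subtype.val h1
      have := congrFun h1' (e.symm ⟨x, hx⟩)
      rwa [OrderIso.apply_symm_apply] at this
    · have hx' : x ∈ Sᶜ := Finset.mem_compl.mpr hx
      have := congrFun h2 (c.symm ⟨x, hx'⟩)
      have := congrArg Subtype.val this
      simp only [hφ] at this
      rwa [OrderIso.apply_symm_apply] at this
  calc Fintype.card _ ≤ Fintype.card (BadT × (Fin (m - t) → {x // x ∈ I})) :=
        Fintype.card_le_of_injective φ hinj
    _ = Nat.card BadT * I.card ^ (m - t) := by
        rw [Fintype.card_prod, Nat.card_eq_fintype_card]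
        congr 1
        rw [Fintype.card_fun, Fintype.card_coe, Fintype.card_fin]

lemma exists_good (N v m t : ℕ) (htm : t ≤ m)
    (I : Finset (Fin N → Fin v)) (hI : I.Nonempty) (E : ℕ)
    (hcount : (m.choose t : ℝ) *
        (Nat.card {A : Fin t → (Fin N → Fin v) //
          (∀ i, A i ∈ I) ∧ ∃ a : Fin t → Fin v, ∀ r : Fin N, ∃ i, A i r ≠ a i} : ℝ)
      < ((E : ℝ) + 1) * (I.card : ℝ) ^ t) :
    ∃ f : Fin m → (Fin N → Fin v), (∀ j, f j ∈ I) ∧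
      ((Finset.powersetCard t (Finset.univ : Finset (Fin m))).filter
        (fun S => ∃ a : Fin m → Fin v, ∀ r : Fin N, ∃ x ∈ S, f x r ≠ a x)).card ≤ E := by
  classical
  set M := Nat.card {A : Fin t → (Fin N → Fin v) //
      (∀ i, A i ∈ I) ∧ ∃ a : Fin t → Fin v, ∀ r : Fin N, ∃ i, A i r ≠ a i} with hM
  set F := {g : Fin m → Fin N → Fin v // ∀ j, g j ∈ I} with hF
  have cardF : Fintype.card F = I.card ^ m := by
    rw [Fintype.card_congr (Equiv.subtypePiEquivPi (p := fun _ b => b ∈ I))]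
    simp [Fintype.card_fun]
  set 𝒮 := Finset.powersetCard t (Finset.univ : Finset (Fin m)) with h𝒮
  set cnt : F → ℕ := fun f =>
    (𝒮.filter (fun S => ∃ a : Fin m → Fin v, ∀ r : Fin N, ∃ x ∈ S, f.1 x r ≠ a x)).card
    with hcnt
  by_contra hcon
  push_neg at hcon
  have hall : ∀ f : F, E + 1 ≤ cnt f := by
    intro f
    exact hcon f.1 f.2
  have hlow : (E + 1) * I.card ^ m ≤ ∑ f : F, cnt f := by
    calc (E + 1) * I.card ^ m = Fintype.card F * (E + 1) := by rw [cardF]; ring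
      _ = ∑ _f : F, (E + 1) := by rw [Finset.sum_const, Finset.card_univ, smul_eq_mul]
      _ ≤ ∑ f : F, cnt f := Finset.sum_le_sum (fun f _ => hall f)
  have hswap : ∑ f : F, cnt f =
      ∑ S ∈ 𝒮, (Finset.univ.filter
        (fun f : F => ∃ a : Fin m → Fin v, ∀ r : Fin N, ∃ x ∈ S, f.1 x r ≠ a x)).card := by
    simp only [hcnt, Finset.card_filter]
    rw [Finset.sum_comm]
  have hper : ∀ S ∈ 𝒮, (Finset.univ.filter
      (fun f : F => ∃ a : Fin m → Fin v, ∀ r : Fin N, ∃ x ∈ S, f.1 x r ≠ a x)).card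
      ≤ M * I.card ^ (m - t) := by
    intro S hSmem
    have hS : S.card = t := (Finset.mem_powersetCard_univ.mp hSmem)
    have := count_bad_at N v m t I S hS
    rwa [Fintype.card_subtype] at this
  have hup : ∑ f : F, cnt f ≤ m.choose t * (M * I.card ^ (m - t)) := by
    rw [hswap]
    calc _ ≤ ∑ _S ∈ 𝒮, M * I.card ^ (m - t) := Finset.sum_le_sum hper
      _ = 𝒮.card * (M * I.card ^ (m - t)) := by rw [Finset.sum_const, smul_eq_mul]
      _ = m.choose t * (M * I.card ^ (m - t)) := by
          rw [h𝒮, Finset.card_powersetCard, Finset.card_univ, Fintype.card_fin]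
  -- contradiction via reals
  have hL : 0 < I.card := Finset.card_pos.mpr hI
  have hnat : (E + 1) * I.card ^ m ≤ m.choose t * (M * I.card ^ (m - t)) :=
    le_trans hlow hup
  have hpos : (0 : ℝ) < (I.card : ℝ) ^ (m - t) := by positivity
  have hsplit : (I.card : ℝ) ^ t * (I.card : ℝ) ^ (m - t) = (I.card : ℝ) ^ m := by
    rw [← pow_add, Nat.add_sub_cancel' htm]
  have hc2 : ((m.choose t : ℝ) * (M : ℝ)) * (I.card : ℝ) ^ (m - t)
      < ((E : ℝ) + 1) * (I.card : ℝ) ^ t * (I.card : ℝ) ^ (m - t) :=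
    mul_lt_mul_of_pos_right hcount hpos
  have hcast : ((E : ℝ) + 1) * (I.card : ℝ) ^ m
      ≤ (m.choose t : ℝ) * ((M : ℝ) * (I.card : ℝ) ^ (m - t)) := by
    exact_mod_cast hnat
  rw [mul_assoc ((E : ℝ) + 1), hsplit] at hc2
  linarith [hcast, hc2]


/-- `A` is a covering array of strength `t`: every `t` distinct columns cover all
`t`-tuples over the alphabet among their rows. -/
def IsCoveringArray {N k v : ℕ} (t : ℕ) (A : Fin N → Fin k → Fin v) : Prop :=
  ∀ cols : Fin t → Fin k, Function.Injective cols →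
    ∀ tup : Fin t → Fin v, ∃ r : Fin N, ∀ i, A r (cols i) = tup i

theorem CA_existence_entropy_compression (N t k v : ℕ)
    (hN : 0 < N) (ht : 2 ≤ t) (hk : 0 < k) (hv : 0 < v)
    (I : Finset (Fin N → Fin v)) (hI : I.Nonempty)
    (h : ((t : ℝ) / ((t : ℝ) - 1)) ^ t * ((t : ℝ) - 1) *
        ((k.choose (t - 1) : ℝ) *
          (Nat.card {A : Fin t → (Fin N → Fin v) //
            (∀ i, A i ∈ I) ∧
            ∃ a : Fin t → Fin v, ∀ r : Fin N, ∃ i, A i r ≠ a i} : ℝ)) <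
        (I.card : ℝ) ^ t) :
    ∃ A : Fin N → Fin k → Fin v,
      (∀ j : Fin k, (fun r => A r j) ∈ I) ∧ IsCoveringArray t A := by
  classical
  by_cases hkt : t ≤ k
  case neg =>
    -- k < t : covering condition is vacuous
    refine ⟨fun r j => hI.choose r, fun j => hI.choose_spec, ?_⟩
    intro cols hc tup
    exfalso
    have := Fintype.card_le_of_injective cols hc
    simp only [Fintype.card_fin] at this
    omega
  case pos =>
  obtain ⟨s, rfl⟩ : ∃ s, t = s + 1 := ⟨t - 1, by omega⟩
  have hs : 1 ≤ s := by omega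
  -- the number of extra columns
  set D := k / s with hDdef
  have hdm : s * D + k % s = k := Nat.div_add_mod k s
  have hmod : k % s < s := Nat.mod_lt _ (by omega)
  have hD1 : k - s + 1 ≤ s * D := by omega
  have hD2 : s * D ≤ k := by omega
  set m := k + D with hmdef
  have htm : s + 1 ≤ m := le_trans hkt (Nat.le_add_right k D)
  have hm0 : 0 < m := Nat.lt_of_lt_of_le hk (Nat.le_add_right k D)
  have hkey := aux_key s k D hs hkt hD1 hD2
  have hDpos : (0 : ℝ) < (D : ℝ) + 1 := by positivity
  set M := Nat.card {A : Fin (s + 1) → (Fin N → Fin v) //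
      (∀ i, A i ∈ I) ∧ ∃ a : Fin (s + 1) → Fin v, ∀ r : Fin N, ∃ i, A i r ≠ a i} with hMdef
  clear_value M
  -- massage hypothesis
  have h' : (((s : ℝ) + 1) / (s : ℝ)) ^ (s + 1) * (s : ℝ) * ((k.choose s : ℝ) * (M : ℝ))
      < (I.card : ℝ) ^ (s + 1) := by
    have h2 := h
    simp only [Nat.add_sub_cancel] at h2
    push_cast at h2
    have e : (s : ℝ) + 1 - 1 = (s : ℝ) := by ring
    rw [e] at h2
    exact h2
  have hcount : (m.choose (s + 1) : ℝ) * (M : ℝ) < ((D : ℝ) + 1) * (I.card : ℝ) ^ (s + 1) := by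
    have hMnn : (0 : ℝ) ≤ (M : ℝ) := by positivity
    calc (m.choose (s + 1) : ℝ) * (M : ℝ)
        ≤ ((D : ℝ) + 1) * ((((s : ℝ) + 1) / s) ^ (s + 1) * s) * (k.choose s) * M :=
          mul_le_mul_of_nonneg_right hkey hMnn
      _ = ((D : ℝ) + 1) * ((((s : ℝ) + 1) / s) ^ (s + 1) * s * ((k.choose s : ℝ) * M)) := by
          ring
      _ < ((D : ℝ) + 1) * (I.card : ℝ) ^ (s + 1) := by
          exact mul_lt_mul_of_pos_left h' hDpos
  rw [hMdef] at hcount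
  clear hMdef h' h hkey
  obtain ⟨f, hfI, hbad⟩ := exists_good N v m (s + 1) htm I hI D hcount
  -- deletion step
  set Bf := (Finset.powersetCard (s + 1) (Finset.univ : Finset (Fin m))).filter
    (fun S => ∃ a : Fin m → Fin v, ∀ r : Fin N, ∃ x ∈ S, f x r ≠ a x) with hBf
  set pick : Finset (Fin m) → Fin m :=
    fun S => if h : S.Nonempty then h.choose else ⟨0, hm0⟩ with hpick
  have hpick_mem : ∀ S : Finset (Fin m), S.Nonempty → pick S ∈ S := by
    intro S hS
    simp only [hpick, dif_pos hS]
    exact hS.choose_spec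
  set Del := Bf.image pick with hDel
  have hDelcard : Del.card ≤ D := le_trans (Finset.card_image_le) hbad
  have hRcard : k ≤ Delᶜ.card := by
    rw [Finset.card_compl, Fintype.card_fin]
    exact Nat.le_sub_of_add_le (Nat.add_le_add_left hDelcard k)
  obtain ⟨R', hR'sub, hR'card⟩ := Finset.exists_subset_card_eq hRcard
  set pos : Fin k ≃o {x // x ∈ R'} := R'.orderIsoOfFin hR'card with hpos
  refine ⟨fun r j => f ((pos j) : Fin m) r, fun j => hfI _, ?_⟩
  intro cols hc tup
  set g : Fin (s + 1) → Fin m := fun i => ((pos (cols i)) : Fin m) with hg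
  have hginj : Function.Injective g := by
    intro i₁ i₂ hgi
    exact hc (pos.injective (Subtype.ext hgi))
  set S := Finset.image g Finset.univ with hS
  have hScard : S.card = s + 1 := by
    rw [hS, Finset.card_image_of_injective _ hginj, Finset.card_univ, Fintype.card_fin]
  have hgR' : ∀ i, g i ∈ R' := fun i => (pos (cols i)).2
  have hSR' : S ⊆ R' := by
    intro x hx
    obtain ⟨i, _, rfl⟩ := Finset.mem_image.mp hx
    exact hgR' i
  have hSnotbad : ¬ ∃ a : Fin m → Fin v, ∀ r : Fin N, ∃ x ∈ S, f x r ≠ a x := by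
    intro hbadS
    have hSmem : S ∈ Bf := by
      rw [hBf, Finset.mem_filter]
      exact ⟨Finset.mem_powersetCard_univ.mpr hScard, hbadS⟩
    have hSne : S.Nonempty := Finset.card_pos.mp (by rw [hScard]; exact Nat.succ_pos s)
    have h1 : pick S ∈ Del := Finset.mem_image_of_mem pick hSmem
    have h2 : pick S ∈ S := hpick_mem S hSne
    have h3 : pick S ∈ Delᶜ := hR'sub (hSR' h2)
    exact (Finset.mem_compl.mp h3) h1
  push_neg at hSnotbad
  set a : Fin m → Fin v :=
    fun x => if hx : ∃ i, g i = x then tup hx.choose else ⟨0, hv⟩ with ha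
  obtain ⟨r, hr⟩ := hSnotbad a
  refine ⟨r, fun i => ?_⟩
  have hgiS : g i ∈ S := Finset.mem_image_of_mem g (Finset.mem_univ i)
  have h1 : f (g i) r = a (g i) := hr (g i) hgiS
  have hex : ∃ i', g i' = g i := ⟨i, rfl⟩
  have h2 : a (g i) = tup hex.choose := by
    simp only [ha, dif_pos hex]
  have h3 : hex.choose = i := hginj hex.choose_spec
  show f (g i) r = tup i
  rw [h1, h2, h3]
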